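/- If a hypergraph is laminar (i.e., any two hyperedges are either disjoint or one is contained in the other), then its vertices can be linearly ordered so that every hyperedge consists of consecutive vertices in that order; that is, every laminar hypergraph is a subpath hypergraph. -/

import Mathlib

universe u

lemma laminar_aux : ∀ (n : ℕ) (V : Type u) [Fintype V] [DecidableEq V]
    (E : Finset (Finset V)), E.card ≤ n →
    (∀ e1 ∈ E, ∀ e2 ∈ E, e1 ∩ e2 = ∅ ∨ e1 ⊆ e2 ∨ e2 ⊆ e1) →
    ∃ f : V → ℕ, Function.Injective f ∧ (∀ v, f v < Fintype.card V) ∧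
      ∀ e ∈ E, ∀ v ∈ e, ∀ w ∈ e, ∀ u, f v ≤ f u → f u ≤ f w → u ∈ e := by
  intro n
  induction n with
  | zero =>
    intro V _ _ E hcard _
    refine ⟨fun v => (Fintype.equivFin V v : ℕ), ?_, fun v => (Fintype.equivFin V v).isLt, ?_⟩
    · intro a b h
      exact (Fintype.equivFin V).injective (Fin.val_injective h)
    · intro e he
      exact absurd (Finset.card_eq_zero.mp (Nat.le_zero.mp hcard) ▸ he) (Finset.notMem_empty e)
  | succ n IH =>
    intro V _ _ E hcard hlam
    by_cases hE1 : (E.filter (fun e => e.Nonempty)).Nonempty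
    case neg =>
      -- all edges are empty; trivial ordering
      refine ⟨fun v => (Fintype.equivFin V v : ℕ), ?_, fun v => (Fintype.equivFin V v).isLt, ?_⟩
      · intro a b h
        exact (Fintype.equivFin V).injective (Fin.val_injective h)
      · intro e he v hv
        exact absurd (Finset.mem_filter.mpr ⟨he, ⟨v, hv⟩⟩) (fun h => hE1 ⟨e, h⟩)
    case pos =>
      obtain ⟨e, heE1, hmax⟩ : ∃ m ∈ E.filter (fun e : Finset V => e.Nonempty),
          ∀ x ∈ E.filter (fun e : Finset V => e.Nonempty), ¬ m < x := by
        obtain ⟨m, hm⟩ := Finset.exists_maximal hE1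
        exact ⟨m, hm.1, fun x hx hlt => lt_irrefl _ (lt_of_lt_of_le hlt (hm.2 hx hlt.le))⟩
      have heE : e ∈ E := (Finset.mem_filter.mp heE1).1
      have hene : e.Nonempty := (Finset.mem_filter.mp heE1).2
      -- every edge is either disjoint from e or contained in e
      have hclass : ∀ e' ∈ E, e' ∩ e = ∅ ∨ e' ⊆ e := by
        intro e' he'
        rcases hlam e' he' e heE with h | h | h
        · exact Or.inl h
        · exact Or.inr h
        · right
          by_contra hns
          have : e < e' := lt_of_le_of_ne h (fun h2 => hns (h2 ▸ le_refl e'))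
          have he'1 : e' ∈ E.filter (fun e => e.Nonempty) :=
            Finset.mem_filter.mpr ⟨he', hene.mono h⟩
          exact hmax e' he'1 this
      -- inside family
      set A := {x : V // x ∈ e}
      set B := {x : V // x ∉ e}
      set Sin := E.filter (fun e' => e' ⊆ e ∧ e' ≠ e) with hSin
      set Sout := E.filter (fun e' => e' ∩ e = ∅) with hSout
      set Ein : Finset (Finset A) := Sin.image (Finset.subtype (· ∈ e)) with hEin
      set Eout : Finset (Finset B) := Sout.image (Finset.subtype (· ∉ e)) with hEout
      have hSinCard : Sin.card < E.card := by
        apply Finset.card_lt_card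
        refine ⟨Finset.filter_subset _ _, fun hsub => ?_⟩
        have := Finset.mem_filter.mp (hsub heE)
        exact this.2.2 rfl
      have hSoutCard : Sout.card < E.card := by
        apply Finset.card_lt_card
        refine ⟨Finset.filter_subset _ _, fun hsub => ?_⟩
        have := Finset.mem_filter.mp (hsub heE)
        rw [Finset.inter_self] at this
        exact hene.ne_empty this.2
      have hEinCard : Ein.card ≤ n := le_trans (Finset.card_image_le) (by omega)
      have hEoutCard : Eout.card ≤ n := le_trans (Finset.card_image_le) (by omega)
      -- laminarity of images
      have hlamIn : ∀ a1 ∈ Ein, ∀ a2 ∈ Ein, a1 ∩ a2 = ∅ ∨ a1 ⊆ a2 ∨ a2 ⊆ a1 := by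
        intro a1 ha1 a2 ha2
        obtain ⟨e1, he1, rfl⟩ := Finset.mem_image.mp ha1
        obtain ⟨e2, he2, rfl⟩ := Finset.mem_image.mp ha2
        rcases hlam e1 (Finset.mem_filter.mp he1).1 e2 (Finset.mem_filter.mp he2).1 with h | h | h
        · left
          ext x
          simp only [Finset.mem_inter, Finset.mem_subtype, Finset.notMem_empty, iff_false]
          intro ⟨h1, h2⟩
          have hx := Finset.mem_inter.mpr ⟨Finset.mem_subtype.mp h1, Finset.mem_subtype.mp h2⟩
          rw [h] at hx
          exact Finset.notMem_empty _ hx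
        · right; left; intro x hx
          exact Finset.mem_subtype.mpr (h (Finset.mem_subtype.mp hx))
        · right; right; intro x hx
          exact Finset.mem_subtype.mpr (h (Finset.mem_subtype.mp hx))
      have hlamOut : ∀ a1 ∈ Eout, ∀ a2 ∈ Eout, a1 ∩ a2 = ∅ ∨ a1 ⊆ a2 ∨ a2 ⊆ a1 := by
        intro a1 ha1 a2 ha2
        obtain ⟨e1, he1, rfl⟩ := Finset.mem_image.mp ha1
        obtain ⟨e2, he2, rfl⟩ := Finset.mem_image.mp ha2
        rcases hlam e1 (Finset.mem_filter.mp he1).1 e2 (Finset.mem_filter.mp he2).1 with h | h | h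
        · left
          ext x
          simp only [Finset.mem_inter, Finset.mem_subtype, Finset.notMem_empty, iff_false]
          intro ⟨h1, h2⟩
          have hx := Finset.mem_inter.mpr ⟨Finset.mem_subtype.mp h1, Finset.mem_subtype.mp h2⟩
          rw [h] at hx
          exact Finset.notMem_empty _ hx
        · right; left; intro x hx
          exact Finset.mem_subtype.mpr (h (Finset.mem_subtype.mp hx))
        · right; right; intro x hx
          exact Finset.mem_subtype.mpr (h (Finset.mem_subtype.mp hx))
      obtain ⟨fin, hfinInj, hfinLt, hfinConv⟩ := IH A Ein hEinCard hlamIn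
      obtain ⟨fout, hfoutInj, hfoutLt, hfoutConv⟩ := IH B Eout hEoutCard hlamOut
      have hcardA : Fintype.card A = e.card := Fintype.card_coe e
      have hcardB : Fintype.card B = Fintype.card V - e.card := by
        have h := Fintype.card_subtype_compl (fun x : V => x ∈ e)
        rw [show Fintype.card {x : V // x ∈ e} = e.card from Fintype.card_coe e] at h
        exact h
      have hecard : e.card ≤ Fintype.card V := by
        simpa using Finset.card_le_univ e
      refine ⟨fun v => if h : v ∈ e then fin ⟨v, h⟩ else e.card + fout ⟨v, h⟩, ?_, ?_, ?_⟩
      · intro a b hab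
        by_cases ha : a ∈ e <;> by_cases hb : b ∈ e <;> simp only [ha, hb, dif_pos, dif_neg,
          not_false_iff] at hab
        · exact congrArg Subtype.val (hfinInj hab)
        · exact absurd hab (by have := hfinLt ⟨a, ha⟩; omega)
        · exact absurd hab.symm (by have := hfinLt ⟨b, hb⟩; omega)
        · have := hfoutInj (show fout ⟨a, ha⟩ = fout ⟨b, hb⟩ by omega)
          exact congrArg Subtype.val this
      · intro v
        by_cases hv : v ∈ e <;> simp only [hv, dif_pos, dif_neg, not_false_iff]
        · have := hfinLt ⟨v, hv⟩; omega
        · have := hfoutLt ⟨v, hv⟩; omega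
      · intro e' he' v hv w hw u hvu huw
        rcases hclass e' he' with hdisj | hsub
        · -- e' disjoint from e
          have hvne : v ∉ e := fun h =>
            Finset.notMem_empty v (hdisj ▸ Finset.mem_inter.mpr ⟨hv, h⟩)
          have hwne : w ∉ e := fun h =>
            Finset.notMem_empty w (hdisj ▸ Finset.mem_inter.mpr ⟨hw, h⟩)
          simp only [hvne, hwne, dif_neg, not_false_iff] at hvu huw
          have hune : u ∉ e := by
            intro h
            simp only [h, dif_pos] at hvu
            have := hfinLt ⟨u, h⟩
            omega
          simp only [hune, dif_neg, not_false_iff] at hvu huw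
          have ha : (e'.subtype (· ∉ e)) ∈ Eout :=
            Finset.mem_image.mpr ⟨e', Finset.mem_filter.mpr ⟨he', hdisj⟩, rfl⟩
          have := hfoutConv _ ha ⟨v, hvne⟩ (Finset.mem_subtype.mpr hv)
            ⟨w, hwne⟩ (Finset.mem_subtype.mpr hw) ⟨u, hune⟩ (by omega) (by omega)
          exact Finset.mem_subtype.mp this
        · -- e' ⊆ e
          have hve : v ∈ e := hsub hv
          have hwe : w ∈ e := hsub hw
          simp only [hve, hwe, dif_pos] at hvu huw
          have hue : u ∈ e := by
            by_contra h
            simp only [h, dif_neg, not_false_iff] at huw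
            have := hfinLt ⟨w, hwe⟩
            omega
          simp only [hue, dif_pos] at hvu huw
          by_cases heq : e' = e
          · exact heq ▸ hue
          · have ha : (e'.subtype (· ∈ e)) ∈ Ein :=
              Finset.mem_image.mpr ⟨e', Finset.mem_filter.mpr ⟨he', hsub, heq⟩, rfl⟩
            have := hfinConv _ ha ⟨v, hve⟩ (Finset.mem_subtype.mpr hv)
              ⟨w, hwe⟩ (Finset.mem_subtype.mpr hw) ⟨u, hue⟩ hvu huw
            exact Finset.mem_subtype.mp this

theorem laminar_is_subpath {V : Type*} [Fintype V] [DecidableEq V]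
    (E : Finset (Finset V))
    (hlam : ∀ e1 ∈ E, ∀ e2 ∈ E, e1 ∩ e2 = ∅ ∨ e1 ⊆ e2 ∨ e2 ⊆ e1) :
    ∃ π : V ≃ Fin (Fintype.card V),
      ∀ e ∈ E, ∀ v ∈ e, ∀ w ∈ e, ∀ u : V,
        (π v : ℕ) ≤ (π u : ℕ) → (π u : ℕ) ≤ (π w : ℕ) → u ∈ e := by
  obtain ⟨f, hinj, hlt, hconv⟩ := laminar_aux E.card V E le_rfl hlam
  have hbij : Function.Bijective (fun v => (⟨f v, hlt v⟩ : Fin (Fintype.card V))) := by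
    rw [Fintype.bijective_iff_injective_and_card]
    exact ⟨fun a b h => hinj (by simpa [Fin.mk.injEq] using h), by simp⟩
  refine ⟨Equiv.ofBijective _ hbij, ?_⟩
  intro e he v hv w hw u h1 h2
  exact hconv e he v hv w hw u h1 h2
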